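/- Let V ∈ ℝ^{n×n} be symmetric positive definite, S ∈ ℝ^{n×n} skew-symmetric, and B = −(I+S)V^{−1}. If 0 < h < 2/‖V^{−1/2}(I−S²)V^{−1/2}‖ (operator norm), then the spectral radius of I + hB is strictly less than 1. -/

import Mathlib

open Matrix
open scoped Matrix.Norms.L2Operator ComplexConjugate

namespace SpecAux

noncomputable def ev {n : ℕ} (x : Fin n → ℂ) : EuclideanSpace ℂ (Fin n) := (WithLp.equiv 2 _).symm x
noncomputable def evR {n : ℕ} (x : Fin n → ℝ) : EuclideanSpace ℝ (Fin n) := (WithLp.equiv 2 _).symm x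

lemma ev_ne_zero {n : ℕ} {x : Fin n → ℂ} (hx : x ≠ 0) : ev x ≠ 0 := by
  intro H
  exact hx ((WithLp.equiv 2 _).symm.injective (by simpa [ev] using H))

lemma dot_inner {n : ℕ} (x y : Fin n → ℂ) : star x ⬝ᵥ y = inner ℂ (ev x) (ev y) := by
  simp [ev, PiLp.inner_apply, dotProduct, RCLike.inner_apply, mul_comm]

lemma dot_self_norm {n : ℕ} (x : Fin n → ℂ) : (star x ⬝ᵥ x).re = ‖ev x‖ ^ 2 := by
  rw [dot_inner]
  exact_mod_cast inner_self_eq_norm_sq (𝕜 := ℂ) (ev x)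

lemma rayleighR {n : ℕ} (M : Matrix (Fin n) (Fin n) ℝ) (x : Fin n → ℝ) :
    x ⬝ᵥ (M *ᵥ x) ≤ ‖M‖ * (x ⬝ᵥ x) := by
  have h1 : x ⬝ᵥ (M *ᵥ x) = inner ℝ (evR x) (evR (M *ᵥ x)) := by
    simp [evR, PiLp.inner_apply, dotProduct, RCLike.inner_apply, mul_comm]
  have h2 : x ⬝ᵥ x = ‖evR x‖ ^ 2 := by
    rw [show x ⬝ᵥ x = inner ℝ (evR x) (evR x) by
      simp [evR, PiLp.inner_apply, dotProduct, RCLike.inner_apply, mul_comm, -inner_self_eq_norm_sq_to_K]]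
    exact_mod_cast real_inner_self_eq_norm_sq (evR x)
  have h3 : ‖evR (M *ᵥ x)‖ ≤ ‖M‖ * ‖evR x‖ := M.l2_opNorm_mulVec (evR x)
  calc x ⬝ᵥ (M *ᵥ x) ≤ ‖evR x‖ * ‖evR (M *ᵥ x)‖ := h1 ▸ real_inner_le_norm _ _
    _ ≤ ‖evR x‖ * (‖M‖ * ‖evR x‖) := mul_le_mul_of_nonneg_left h3 (norm_nonneg _)
    _ = ‖M‖ * (x ⬝ᵥ x) := by rw [h2]; ring

lemma quad_re {n : ℕ} (M : Matrix (Fin n) (Fin n) ℝ) (z : Fin n → ℂ) :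
    (star z ⬝ᵥ ((M.map Complex.ofReal) *ᵥ z)).re
      = (fun i => (z i).re) ⬝ᵥ (M *ᵥ fun i => (z i).re)
        + (fun i => (z i).im) ⬝ᵥ (M *ᵥ fun i => (z i).im) := by
  simp only [dotProduct, mulVec, Matrix.map_apply, Pi.star_apply, Finset.mul_sum,
    Complex.re_sum, Finset.sum_mul]
  rw [← Finset.sum_add_distrib]
  refine Finset.sum_congr rfl fun j _ => ?_
  rw [← Finset.sum_add_distrib]
  refine Finset.sum_congr rfl fun k _ => ?_
  simp [Complex.mul_re, Complex.mul_im]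

lemma dot_self_re {n : ℕ} (z : Fin n → ℂ) :
    (star z ⬝ᵥ z).re
      = (fun i => (z i).re) ⬝ᵥ (fun i => (z i).re)
        + (fun i => (z i).im) ⬝ᵥ (fun i => (z i).im) := by
  simp only [dotProduct, Pi.star_apply, Complex.re_sum]
  rw [← Finset.sum_add_distrib]
  refine Finset.sum_congr rfl fun j _ => ?_
  simp [Complex.mul_re]

lemma quad_le {n : ℕ} (M : Matrix (Fin n) (Fin n) ℝ) (z : Fin n → ℂ) :
    (star z ⬝ᵥ ((M.map Complex.ofReal) *ᵥ z)).re ≤ ‖M‖ * (star z ⬝ᵥ z).re := by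
  rw [quad_re, dot_self_re, mul_add]
  have h1 := rayleighR M (fun i => (z i).re)
  have h2 := rayleighR M (fun i => (z i).im)
  linarith

lemma mapc_mul {n : ℕ} (A B : Matrix (Fin n) (Fin n) ℝ) :
    (A * B).map Complex.ofReal = A.map Complex.ofReal * B.map Complex.ofReal :=
  Matrix.map_mul (f := Complex.ofRealHom)

lemma mapc_one {n : ℕ} :
    (1 : Matrix (Fin n) (Fin n) ℝ).map Complex.ofReal = 1 :=
  Matrix.map_one _ (by simp) (by simp)

lemma mapc_neg {n : ℕ} (A : Matrix (Fin n) (Fin n) ℝ) :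
    (-A).map Complex.ofReal = -(A.map Complex.ofReal) := by
  ext i j; simp [Matrix.map_apply]

lemma mapc_sub {n : ℕ} (A B : Matrix (Fin n) (Fin n) ℝ) :
    (A - B).map Complex.ofReal = A.map Complex.ofReal - B.map Complex.ofReal := by
  ext i j; simp [Matrix.map_apply]

lemma mapc_add {n : ℕ} (A B : Matrix (Fin n) (Fin n) ℝ) :
    (A + B).map Complex.ofReal = A.map Complex.ofReal + B.map Complex.ofReal := by
  ext i j; simp [Matrix.map_apply]

lemma mapc_conjT {n : ℕ} (A : Matrix (Fin n) (Fin n) ℝ) :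
    (A.map Complex.ofReal)ᴴ = Aᵀ.map Complex.ofReal := by
  ext i j
  simp [Matrix.conjTranspose_apply, Matrix.map_apply]

lemma conj_dot {n : ℕ} (A : Matrix (Fin n) (Fin n) ℝ) (y : Fin n → ℂ) :
    (starRingEnd ℂ) (star y ⬝ᵥ ((A.map Complex.ofReal) *ᵥ y))
      = star y ⬝ᵥ ((Aᵀ.map Complex.ofReal) *ᵥ y) := by
  have h1 : star y ⬝ᵥ ((A.map Complex.ofReal) *ᵥ y)
      = star (star ((A.map Complex.ofReal) *ᵥ y) ⬝ᵥ y) := star_dotProduct _ _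
  rw [h1, Matrix.star_mulVec, ← Matrix.dotProduct_mulVec, mapc_conjT]
  simp

lemma norm_lt_one_of {μ : ℂ} {t p r qq : ℝ} (hp : 0 < p) (hrpos : 0 < r)
    (ht : 0 < t) (hkey : t * (p ^ 2 + qq ^ 2) < 2 * (p * r))
    (hns : Complex.normSq μ * (r * r) = (r - t * p) ^ 2 + (t * qq) ^ 2) :
    ‖μ‖ < 1 := by
  have hineq : (r - t * p) ^ 2 + (t * qq) ^ 2 < r * r := by
    nlinarith [mul_lt_mul_of_pos_left hkey ht]
  have h2 : Complex.normSq μ * (r * r) < r * r := by rw [hns]; exact hineq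
  have hrr : 0 < r * r := mul_pos hrpos hrpos
  have hlt : Complex.normSq μ < 1 := by nlinarith
  have h1 : ‖μ‖ ^ 2 = Complex.normSq μ := by
    rw [Complex.sq_norm]
  nlinarith [norm_nonneg μ]

end SpecAux

open SpecAux

theorem spectral_radius_lt_one
    (n : ℕ) (V S B : Matrix (Fin n) (Fin n) ℝ)
    (hV : V.PosDef) (hVsym : Vᵀ = V) (hSskew : Sᵀ = -S)
    (hB : B = -((1 + S) * V⁻¹))
    (W : Matrix (Fin n) (Fin n) ℝ) (hW : W.PosDef) (hWsq : W * W = V⁻¹)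
    (h : ℝ) (hh0 : 0 < h) (hh : h < 2 / ‖W * (1 - S * S) * W‖) :
    spectralRadius ℂ ((1 + h • B).map (Complex.ofReal)) < 1 := by
  classical
  set A : Matrix (Fin n) (Fin n) ℂ := (1 + h • B).map (Complex.ofReal) with hA
  suffices H : ∀ μ ∈ spectrum ℂ A, ‖μ‖₊ < 1 by
    have hfin : (spectrum ℂ A).Finite := A.finite_spectrum
    rw [spectralRadius]
    calc ⨆ k ∈ spectrum ℂ A, (‖k‖₊ : ENNReal)
        ≤ (hfin.toFinset.sup fun k => (‖k‖₊ : ENNReal)) := by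
          apply iSup₂_le
          intro k hk
          exact Finset.le_sup (f := fun k => (‖k‖₊ : ENNReal)) (hfin.mem_toFinset.mpr hk)
      _ < 1 := by
          rw [Finset.sup_lt_iff (show (⊥ : ENNReal) < 1 by norm_num)]
          intro k hk
          exact_mod_cast H k (hfin.mem_toFinset.mp hk)
  intro μ hμ
  -- real matrix identities
  have hVdet : IsUnit V.det := isUnit_iff_ne_zero.mpr (ne_of_gt hV.det_pos)
  have hVV : V * V⁻¹ = 1 := Matrix.mul_nonsing_inv V hVdet
  have hVV' : V⁻¹ * V = 1 := Matrix.nonsing_inv_mul V hVdet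
  have hWW_V : (W * W) * V = 1 := by rw [hWsq, hVV']
  have hV_WW : V * (W * W) = 1 := by rw [hWsq, hVV]
  have hWsym : Wᵀ = W := hW.isHermitian.eq
  have hcomm : V * W = W * V := by
    calc V * W = (V * (W * W)) * (W * V) := by
          simp only [mul_assoc]
          rw [show W * (W * (W * V)) = W * ((W * W) * V) by simp only [mul_assoc], hWW_V, mul_one]
      _ = W * V := by rw [hV_WW, one_mul]
  have hWVW : W * V * W = 1 := by rw [mul_assoc, hcomm, ← mul_assoc, hWW_V]
  have hWK : W * (W * V) = 1 := by rw [← mul_assoc, hWW_V]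
  have hKK : (W * V) * (W * V) = V := by
    rw [← mul_assoc, hWVW, one_mul]
  have hKMK : (W * V) * (W * (1 - S * S) * W) * (W * V) = 1 - S * S := by
    simp only [← mul_assoc]
    rw [hWVW, one_mul, mul_assoc (1 - S * S) W W, mul_assoc (1 - S * S) (W * W) V, hWW_V, mul_one]
  have hKT : (W * V)ᵀ = W * V := by rw [Matrix.transpose_mul, hVsym, hWsym, hcomm]
  have hBV : B * V = -(1 + S) := by
    rw [hB, neg_mul, mul_assoc, hVV', mul_one]
  -- eigenvector
  obtain ⟨v, hv0, hv⟩ : ∃ v, v ≠ 0 ∧ A *ᵥ v = μ • v := by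
    rw [spectrum.mem_iff, Matrix.isUnit_iff_isUnit_det, isUnit_iff_ne_zero, not_not] at hμ
    obtain ⟨v, hv0, hv⟩ := (Matrix.exists_mulVec_eq_zero_iff).mpr hμ
    refine ⟨v, hv0, ?_⟩
    rw [sub_mulVec, sub_eq_zero] at hv
    rw [← hv, Algebra.algebraMap_eq_smul_one, smul_mulVec, one_mulVec]
  set y : Fin n → ℂ := (V⁻¹.map Complex.ofReal) *ᵥ v with hy
  have hVcy : (V.map Complex.ofReal) *ᵥ y = v := by
    rw [hy, Matrix.mulVec_mulVec, ← mapc_mul, hVV, mapc_one, Matrix.one_mulVec]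
  have hy0 : y ≠ 0 := by
    intro h0
    exact hv0 (by rw [← hVcy, h0, Matrix.mulVec_zero])
  have hAc : A = 1 + (h : ℂ) • (B.map Complex.ofReal) := by
    ext i j
    simp [hA, Matrix.map_apply, Matrix.add_apply, Matrix.one_apply, Matrix.smul_apply,
      apply_ite, smul_eq_mul]
  have hBcv : (B.map Complex.ofReal) *ᵥ v = -(y + (S.map Complex.ofReal) *ᵥ y) := by
    rw [← hVcy, Matrix.mulVec_mulVec, ← mapc_mul, hBV,
      show (-(1 + S)).map Complex.ofReal = -(1 + S.map Complex.ofReal) by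
        rw [mapc_neg, mapc_add, mapc_one],
      Matrix.neg_mulVec, Matrix.add_mulVec, Matrix.one_mulVec]
  rw [hAc, Matrix.add_mulVec, Matrix.one_mulVec, Matrix.smul_mulVec, hBcv, ← hVcy] at hv
  -- quadratic forms
  set P : ℂ := star y ⬝ᵥ y with hPdef
  set Q : ℂ := star y ⬝ᵥ ((S.map Complex.ofReal) *ᵥ y) with hQdef
  set R : ℂ := star y ⬝ᵥ ((V.map Complex.ofReal) *ᵥ y) with hRdef
  have hdot : R + (h : ℂ) * -(P + Q) = μ * R := by
    have h0 := congrArg (fun w => star y ⬝ᵥ w) hv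
    simp only [dotProduct_add, dotProduct_smul, dotProduct_neg, smul_eq_mul] at h0
    rw [hPdef, hQdef, hRdef]
    linear_combination h0
  -- realness
  have hPreal : (P.re : ℂ) = P := by
    rw [← Complex.conj_eq_iff_re]
    exact (star_dotProduct y y).symm
  have hRreal : (R.re : ℂ) = R := by
    rw [← Complex.conj_eq_iff_re, hRdef, conj_dot, hVsym]
  have hQre : Q.re = 0 := by
    have hc : (starRingEnd ℂ) Q = -Q := by
      rw [hQdef, conj_dot, hSskew, mapc_neg, Matrix.neg_mulVec, dotProduct_neg]
    have h2 : ((2 * Q.re : ℝ) : ℂ) = 0 := by rw [← Complex.add_conj, hc]; ring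
    have : (2 : ℝ) * Q.re = 0 := by exact_mod_cast h2
    linarith
  set p : ℝ := P.re with hp'
  set r : ℝ := R.re with hr'
  set qq : ℝ := Q.im with hqq'
  -- the auxiliary vectors z (= W⁻¹ y) and u (= S y)
  set z : Fin n → ℂ := (((W * V).map Complex.ofReal)) *ᵥ y with hz
  set u : Fin n → ℂ := (S.map Complex.ofReal) *ᵥ y with hu
  have hWz : (W.map Complex.ofReal) *ᵥ z = y := by
    rw [hz, Matrix.mulVec_mulVec, ← mapc_mul, hWK, mapc_one, Matrix.one_mulVec]
  have hz0 : z ≠ 0 := by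
    intro h0
    exact hy0 (by rw [← hWz, h0, Matrix.mulVec_zero])
  have hzz : star z ⬝ᵥ z = R := by
    rw [hz, Matrix.star_mulVec, ← Matrix.dotProduct_mulVec, Matrix.mulVec_mulVec,
      mapc_conjT, hKT, ← mapc_mul, hKK, hRdef]
  have hsu : star u ⬝ᵥ u = star y ⬝ᵥ (((Sᵀ * S).map Complex.ofReal) *ᵥ y) := by
    rw [hu, Matrix.star_mulVec, ← Matrix.dotProduct_mulVec, Matrix.mulVec_mulVec,
      mapc_conjT, ← mapc_mul]
  have hzMz : star z ⬝ᵥ (((W * (1 - S * S) * W).map Complex.ofReal) *ᵥ z)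
      = P + star u ⬝ᵥ u := by
    rw [hz, Matrix.star_mulVec, ← Matrix.dotProduct_mulVec, Matrix.mulVec_mulVec,
      Matrix.mulVec_mulVec, mapc_conjT, hKT, ← mapc_mul, ← mapc_mul, hKMK]
    rw [hsu, show Sᵀ * S = -(S * S) by rw [hSskew, neg_mul]]
    rw [mapc_sub, mapc_one, mapc_neg, Matrix.sub_mulVec, Matrix.neg_mulVec,
      Matrix.one_mulVec, dotProduct_sub, dotProduct_neg, hPdef, sub_eq_add_neg]
  set nu : ℝ := (star u ⬝ᵥ u).re with hnu'
  -- positivity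
  have hp : 0 < p := by
    rw [hp', hPdef, dot_self_norm]
    exact pow_pos (norm_pos_iff.mpr (ev_ne_zero hy0)) 2
  have hr : 0 < r := by
    rw [hr', ← hzz, dot_self_norm]
    exact pow_pos (norm_pos_iff.mpr (ev_ne_zero hz0)) 2
  have hnu : 0 ≤ nu := by
    rw [hnu', dot_self_norm]; positivity
  -- Cauchy-Schwarz : qq^2 ≤ p * nu
  have hCS : qq ^ 2 ≤ p * nu := by
    have h1 : ‖Q‖ ≤ ‖ev y‖ * ‖ev u‖ := by
      rw [hQdef, dot_inner]
      exact norm_inner_le_norm _ _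
    have h2 : ‖Q‖ ^ 2 = Q.re ^ 2 + Q.im ^ 2 := by
      rw [Complex.sq_norm, Complex.normSq_apply]; ring
    have h3 : p = ‖ev y‖ ^ 2 := by rw [hp', hPdef, dot_self_norm]
    have h4 : nu = ‖ev u‖ ^ 2 := by rw [hnu', dot_self_norm]
    have h5 : ‖Q‖ ^ 2 ≤ (‖ev y‖ * ‖ev u‖) ^ 2 := by
      have := norm_nonneg Q
      nlinarith
    rw [h2, hQre] at h5
    rw [h3, h4]
    calc qq ^ 2 = 0 ^ 2 + Q.im ^ 2 := by rw [hqq']; ring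
      _ ≤ (‖ev y‖ * ‖ev u‖) ^ 2 := h5
      _ = ‖ev y‖ ^ 2 * ‖ev u‖ ^ 2 := by ring
  -- Rayleigh bound : p + nu ≤ ‖M‖ * r
  have hRay : p + nu ≤ ‖W * (1 - S * S) * W‖ * r := by
    have := quad_le (W * (1 - S * S) * W) z
    rw [hzMz, hzz, Complex.add_re, ← hp', ← hnu', ← hr'] at this
    exact this
  -- norm positivity
  have hM0 : 0 < ‖W * (1 - S * S) * W‖ := by
    rcases (norm_nonneg (W * (1 - S * S) * W)).eq_or_lt with he | hl
    · rw [← he] at hh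
      simp at hh
      linarith
    · exact hl
  have hhM : h * ‖W * (1 - S * S) * W‖ < 2 := (lt_div_iff₀ hM0).mp hh
  -- key inequality
  have hkey : h * (p ^ 2 + qq ^ 2) < 2 * (p * r) := by
    have t2 : h * p * (p + nu) ≤ h * p * (‖W * (1 - S * S) * W‖ * r) :=
      mul_le_mul_of_nonneg_left hRay (by positivity)
    have t3 : (h * ‖W * (1 - S * S) * W‖) * (p * r) < 2 * (p * r) :=
      mul_lt_mul_of_pos_right hhM (mul_pos hp hr)
    nlinarith [mul_le_mul_of_nonneg_left hCS hh0.le]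
  -- conclude
  clear_value P Q R p r qq z u nu y
  have hμr : μ * (r : ℂ) = (r : ℂ) - (h : ℂ) * ((p : ℂ) + Q) := by
    rw [hRreal, ← hdot, hPreal]; ring
  have hwre : (μ * (r : ℂ)).re = r - h * p := by
    rw [hμr]
    simp [Complex.sub_re, Complex.mul_re, Complex.add_re, Complex.add_im, hQre]
  have hwim : (μ * (r : ℂ)).im = -(h * qq) := by
    rw [hμr]
    simp [Complex.sub_im, Complex.mul_im, Complex.add_re, Complex.add_im, hQre, hqq']
  have hns : Complex.normSq μ * (r * r) = (r - h * p) ^ 2 + (h * qq) ^ 2 := by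
    have hmul : Complex.normSq (μ * (r : ℂ)) = Complex.normSq μ * (r * r) := by
      rw [Complex.normSq_mul, Complex.normSq_ofReal]
    rw [← hmul, Complex.normSq_apply, hwre, hwim]; ring
  exact_mod_cast norm_lt_one_of hp hr hh0 hkey hns
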